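/- If v ≥ 2r+1 and v ≡ 1 (mod r), then any partial r-spread in PG(v−1, F_q) has size at most (q^v − q)/(q^r − 1) − q + 1 = q^(v−r) + q^(v−2r) + ... + q^(r+1) + 1. -/

import Mathlib

open Finset Module

open scoped Classical in
private lemma aux_card_filter_gen {F M : Type*} [Field F] [Fintype F] [AddCommGroup M]
    [Module F M] [Fintype M] (U : Submodule F M) :
    (Finset.univ.filter fun x => x ∈ U ∧ x ≠ 0).card + 1
      = Fintype.card F ^ Module.finrank F U := by
  classical
  have h1 : (Finset.univ.filter fun x : M => x ∈ U)
      = insert 0 (Finset.univ.filter fun x => x ∈ U ∧ x ≠ 0) := by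
    ext x
    simp only [mem_filter, mem_insert, mem_univ, true_and]
    by_cases hx : x = 0 <;> simp [hx, U.zero_mem]
  have h2 : (Finset.univ.filter fun x : M => x ∈ U).card
      = Fintype.card F ^ Module.finrank F U := by
    rw [← Fintype.card_subtype]
    exact card_eq_pow_finrank
  rw [h1, card_insert_of_notMem (by simp)] at h2
  omega

open scoped Classical in
private lemma aux_count_gen {F M : Type*} [Field F] [Fintype F] [AddCommGroup M]
    [Module F M] [Fintype M] (S : Finset (Submodule F M))
    (hdisj : ∀ W1 ∈ S, ∀ W2 ∈ S, W1 ≠ W2 → W1 ⊓ W2 = ⊥) (T : Submodule F M) :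
    (Finset.univ.filter fun x => x ∈ T ∧ x ≠ 0 ∧ ∀ W ∈ S, x ∉ W).card
      + ∑ W ∈ S, (Finset.univ.filter fun x => x ∈ W ⊓ T ∧ x ≠ 0).card
      = (Finset.univ.filter fun x => x ∈ T ∧ x ≠ 0).card := by
  classical
  have hcov : (Finset.univ.filter fun x : M => (x ∈ T ∧ x ≠ 0) ∧ ∃ W ∈ S, x ∈ W)
      = S.biUnion fun W => Finset.univ.filter fun x => x ∈ W ⊓ T ∧ x ≠ 0 := by
    ext x
    simp only [mem_filter, mem_biUnion, mem_univ, true_and, Submodule.mem_inf]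
    tauto
  have hsum : ∑ W ∈ S, (Finset.univ.filter fun x => x ∈ W ⊓ T ∧ x ≠ 0).card
      = (Finset.univ.filter fun x : M => (x ∈ T ∧ x ≠ 0) ∧ ∃ W ∈ S, x ∈ W).card := by
    rw [hcov, card_biUnion]
    intro W1 h1 W2 h2 hne
    refine Finset.disjoint_left.mpr ?_
    intro x hx1 hx2
    simp only [mem_filter, mem_univ, true_and, Submodule.mem_inf] at hx1 hx2
    have hx : x ∈ W1 ⊓ W2 := Submodule.mem_inf.mpr ⟨hx1.1.1, hx2.1.1⟩
    rw [hdisj W1 h1 W2 h2 hne] at hx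
    exact hx1.2 hx
  have hpart := Finset.card_filter_add_card_filter_not
    (s := Finset.univ.filter fun x : M => x ∈ T ∧ x ≠ 0)
    (p := fun x => ∃ W ∈ S, x ∈ W)
  rw [Finset.filter_filter, Finset.filter_filter] at hpart
  have e1 : (Finset.univ.filter fun x : M => (x ∈ T ∧ x ≠ 0) ∧ ¬ ∃ W ∈ S, x ∈ W)
      = Finset.univ.filter fun x => x ∈ T ∧ x ≠ 0 ∧ ∀ W ∈ S, x ∉ W := by
    ext x
    simp only [mem_filter, mem_univ, true_and, not_exists]
    tauto
  rw [e1] at hpart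
  omega

private lemma aux_finrank_inf_gen {F V : Type*} [Field F] [AddCommGroup V] [Module F V]
    [FiniteDimensional F V] (φ : Module.Dual F V) (hφ : φ ≠ 0) (W : Submodule F V)
    (hW : ¬ W ≤ LinearMap.ker φ) :
    Module.finrank F ↥(W ⊓ LinearMap.ker φ) + 1 = Module.finrank F W := by
  have hker : finrank F (LinearMap.ker φ) + 1 = finrank F V :=
    Module.Dual.finrank_ker_add_one_of_ne_zero hφ
  have hsum := Submodule.finrank_sup_add_finrank_inf_eq W (LinearMap.ker φ)
  have hlt : LinearMap.ker φ < W ⊔ LinearMap.ker φ := by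
    refine lt_of_le_of_ne le_sup_right fun he => hW ?_
    rw [he]
    exact le_sup_left
  have h1 : finrank F (LinearMap.ker φ) < finrank F ↥(W ⊔ LinearMap.ker φ) :=
    Submodule.finrank_lt_finrank_of_lt hlt
  have h2 : finrank F ↥(W ⊔ LinearMap.ker φ) ≤ finrank F V :=
    Submodule.finrank_le _
  omega

-- Specializations to the concrete types used in the main theorem, so that
-- instance paths in the statements agree syntactically with those elaborated there.
open scoped Classical in
private lemma aux_card_filter {F : Type*} [Field F] [Fintype F] {n : ℕ}
    (U : Submodule F (Fin n → F)) :
    (Finset.univ.filter fun x => x ∈ U ∧ x ≠ 0).card + 1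
      = Fintype.card F ^ Module.finrank F U := by
  classical
  have h1 : (Finset.univ.filter fun x => x ∈ U)
      = insert 0 (Finset.univ.filter fun x => x ∈ U ∧ x ≠ 0) := by
    ext x
    simp only [mem_filter, mem_insert, mem_univ, true_and]
    by_cases hx : x = 0 <;> simp [hx, U.zero_mem]
  have h2 : (Finset.univ.filter fun x => x ∈ U).card
      = Fintype.card F ^ Module.finrank F U := by
    rw [← Fintype.card_subtype]
    exact card_eq_pow_finrank
  rw [h1, card_insert_of_notMem (by simp)] at h2
  omega

open scoped Classical in
private lemma aux_card_filter_dual {F : Type*} [Field F] [Fintype F] {n : ℕ}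
    [Fintype (Module.Dual F (Fin n → F))]
    (U : Submodule F (Module.Dual F (Fin n → F))) :
    (Finset.univ.filter fun x => x ∈ U ∧ x ≠ 0).card + 1
      = Fintype.card F ^ Module.finrank F U := by
  classical
  have h1 : (Finset.univ.filter fun x => x ∈ U)
      = insert 0 (Finset.univ.filter fun x => x ∈ U ∧ x ≠ 0) := by
    ext x
    simp only [mem_filter, mem_insert, mem_univ, true_and]
    by_cases hx : x = 0 <;> simp [hx, U.zero_mem]
  have h2 : (Finset.univ.filter fun x => x ∈ U).card
      = Fintype.card F ^ Module.finrank F U := by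
    rw [← Fintype.card_subtype]
    exact Module.card_eq_pow_finrank (K := F) (V := U)
  rw [h1, card_insert_of_notMem (by simp)] at h2
  omega

open scoped Classical in
private lemma aux_count {F : Type*} [Field F] [Fintype F] {n : ℕ}
    (S : Finset (Submodule F (Fin n → F)))
    (hdisj : ∀ W1 ∈ S, ∀ W2 ∈ S, W1 ≠ W2 → W1 ⊓ W2 = ⊥) (T : Submodule F (Fin n → F)) :
    (Finset.univ.filter fun x => x ∈ T ∧ x ≠ 0 ∧ ∀ W ∈ S, x ∉ W).card
      + ∑ W ∈ S, (Finset.univ.filter fun x => x ∈ W ⊓ T ∧ x ≠ 0).card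
      = (Finset.univ.filter fun x => x ∈ T ∧ x ≠ 0).card := by
  classical
  have hcov : (Finset.univ.filter fun x : Fin n → F => (x ∈ T ∧ x ≠ 0) ∧ ∃ W ∈ S, x ∈ W)
      = S.biUnion fun W => Finset.univ.filter fun x => x ∈ W ⊓ T ∧ x ≠ 0 := by
    ext x
    simp only [mem_filter, mem_biUnion, mem_univ, true_and, Submodule.mem_inf]
    tauto
  have hsum : ∑ W ∈ S, (Finset.univ.filter fun x => x ∈ W ⊓ T ∧ x ≠ 0).card
      = (Finset.univ.filter fun x : Fin n → F => (x ∈ T ∧ x ≠ 0) ∧ ∃ W ∈ S, x ∈ W).card := by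
    rw [hcov, card_biUnion]
    intro W1 h1 W2 h2 hne
    refine Finset.disjoint_left.mpr ?_
    intro x hx1 hx2
    simp only [mem_filter, mem_univ, true_and, Submodule.mem_inf] at hx1 hx2
    have hx : x ∈ W1 ⊓ W2 := Submodule.mem_inf.mpr ⟨hx1.1.1, hx2.1.1⟩
    rw [hdisj W1 h1 W2 h2 hne] at hx
    exact hx1.2 hx
  have hpart := Finset.card_filter_add_card_filter_not
    (s := Finset.univ.filter fun x : Fin n → F => x ∈ T ∧ x ≠ 0)
    (p := fun x => ∃ W ∈ S, x ∈ W)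
  rw [Finset.filter_filter, Finset.filter_filter] at hpart
  have e1 : (Finset.univ.filter fun x : Fin n → F => (x ∈ T ∧ x ≠ 0) ∧ ¬ ∃ W ∈ S, x ∈ W)
      = Finset.univ.filter fun x => x ∈ T ∧ x ≠ 0 ∧ ∀ W ∈ S, x ∉ W := by
    ext x
    simp only [mem_filter, mem_univ, true_and, not_exists]
    tauto
  rw [e1] at hpart
  omega

private lemma aux_finrank_inf {F : Type*} [Field F] [Fintype F] {n : ℕ}
    (φ : Module.Dual F (Fin n → F)) (hφ : φ ≠ 0) (W : Submodule F (Fin n → F))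
    (hW : ¬ W ≤ LinearMap.ker φ) :
    Module.finrank F ↥(W ⊓ LinearMap.ker φ) + 1 = Module.finrank F W :=
  aux_finrank_inf_gen φ hφ W hW

set_option maxHeartbeats 2000000 in
/-- If v ≥ 2r+1 and v ≡ 1 (mod r), any partial r-spread in PG(v−1, F_q) has size
at most (q^v − q)/(q^r − 1) − q + 1. -/
theorem partial_spread_bound {F : Type*} [Field F] [Fintype F] {v r : ℕ}
    (hr : 2 ≤ r) (hv : 2 * r + 1 ≤ v) (hmod : v % r = 1)
    (S : Finset (Submodule F (Fin v → F)))
    (hdim : ∀ W ∈ S, Module.finrank F W = r)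
    (hdisj : ∀ W1 ∈ S, ∀ W2 ∈ S, W1 ≠ W2 → W1 ⊓ W2 = ⊥) :
    S.card ≤ (Fintype.card F ^ v - Fintype.card F) / (Fintype.card F ^ r - 1)
      - Fintype.card F + 1 := by
  classical
  set q := Fintype.card F with hqdef
  have hq2 : 2 ≤ q := Fintype.one_lt_card
  clear_value q
  obtain ⟨k, hk⟩ : ∃ k, v = r * k + 1 := ⟨v / r, by have := Nat.div_add_mod v r; omega⟩
  have hk2 : 2 ≤ k := by
    rcases Nat.lt_or_ge k 2 with hlt | hge
    · interval_cases k <;> omega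
    · exact hge
  -- geometric sum and the division in the goal
  set Dn : ℕ := ∑ i ∈ Finset.range k, (q ^ r) ^ i with hDndef
  have hDnZ : (Dn : ℤ) = ∑ i ∈ Finset.range k, ((q : ℤ) ^ r) ^ i := by
    rw [hDndef]; push_cast; ring
  have geoZ : ((q : ℤ) ^ r - 1) * ((q : ℤ) * (Dn : ℤ)) = (q : ℤ) ^ v - q := by
    have g := geom_sum_mul ((q : ℤ) ^ r) k
    rw [hDnZ, hk, pow_succ, pow_mul]
    linear_combination (q : ℤ) * g
  have hqr2 : 2 ≤ q ^ r := le_trans hq2 (Nat.le_self_pow (by omega) q)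
  have hqv : q ≤ q ^ v := Nat.le_self_pow (by omega) q
  have hqr1 : 1 ≤ q ^ r := by omega
  have hD : (q * Dn) * (q ^ r - 1) = q ^ v - q := by
    zify [hqr1, hqv]
    linear_combination geoZ
  have hdiv : (q ^ v - q) / (q ^ r - 1) = q * Dn := by
    rw [← hD, Nat.mul_div_cancel _ (by omega)]
  rw [hdiv]
  by_contra hcon
  push_neg at hcon
  have hDn1 : 1 ≤ Dn := by
    rw [hDndef]
    calc 1 = (q ^ r) ^ 0 := by norm_num
    _ ≤ ∑ i ∈ Finset.range k, (q ^ r) ^ i :=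
      Finset.single_le_sum (f := fun i => (q ^ r) ^ i) (fun i _ => Nat.zero_le _)
        (Finset.mem_range.mpr (by omega))
  have hqDn : q ≤ q * Dn := Nat.le_mul_of_pos_right q (by omega)
  clear_value Dn
  have hn2 : q * Dn + 2 ≤ S.card + q := by omega
  -- counting setup
  have hfinV : finrank F (Fin v → F) = v := Module.finrank_fin_fun F
  have Htop := aux_count S hdisj (⊤ : Submodule F (Fin v → F))
  simp only [inf_top_eq] at Htop
  try simp only [Finset.filter_congr_decidable] at Htop
  set HS : Finset (Fin v → F) := Finset.univ.filter
      (fun x => x ∈ (⊤ : Submodule F (Fin v → F)) ∧ x ≠ 0 ∧ ∀ W ∈ S, x ∉ W) with hHSdef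
  set h : ℕ := HS.card with hhdef
  clear_value HS h
  have hcTZ : ((Finset.univ.filter fun x : Fin v → F =>
      x ∈ (⊤ : Submodule F (Fin v → F)) ∧ x ≠ 0).card : ℤ) + 1 = (q : ℤ) ^ v := by
    have h1 := aux_card_filter (⊤ : Submodule F (Fin v → F))
    rw [finrank_top, hfinV, ← hqdef] at h1
    try simp only [Finset.filter_congr_decidable] at h1
    exact_mod_cast h1
  have HtopZ : (h : ℤ) + (S.card : ℤ) * ((q : ℤ) ^ r - 1) = (q : ℤ) ^ v - 1 := by
    have hZ := congrArg (fun z : ℕ => (z : ℤ)) Htop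
    push_cast at hZ
    have hper : ∀ W ∈ S, ((Finset.univ.filter fun x : Fin v → F =>
        x ∈ W ∧ x ≠ 0).card : ℤ) = (q : ℤ) ^ r - 1 := by
      intro W hW
      have h1 := aux_card_filter W
      rw [hdim W hW, ← hqdef] at h1
      try simp only [Finset.filter_congr_decidable] at h1
      have h2 := congrArg (fun z : ℕ => (z : ℤ)) h1
      push_cast at h2
      linarith
    rw [Finset.sum_congr rfl hper, Finset.sum_const, nsmul_eq_mul] at hZ
    linarith [hcTZ, hZ]
  -- powers as atoms
  set PZ : ℤ := (q : ℤ) ^ (r - 1) with hPZdef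
  set QZ : ℤ := (q : ℤ) ^ (v - r) with hQZdef
  have hp3 : (q : ℤ) ^ r = q * PZ := by
    rw [hPZdef, ← pow_succ']; congr 1; omega
  have hp2 : (q : ℤ) ^ (v - 1) = PZ * QZ := by
    rw [hPZdef, hQZdef, ← pow_add]; congr 1; omega
  have hp1 : (q : ℤ) ^ v = q * (PZ * QZ) := by
    rw [hPZdef, hQZdef, ← pow_add, ← pow_succ']; congr 1; omega
  clear_value PZ QZ
  have hq2Z : (2 : ℤ) ≤ (q : ℤ) := by exact_mod_cast hq2
  have hPZ2 : (2 : ℤ) ≤ PZ := by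
    rw [hPZdef]
    exact_mod_cast le_trans hq2 (Nat.le_self_pow (by omega) q)
  have hQZ1 : (1 : ℤ) ≤ QZ := by
    rw [hQZdef]
    exact_mod_cast Nat.one_le_pow (v - r) q (by omega)
  -- the parameter t
  obtain ⟨t, ht, htlb, htub⟩ : ∃ t : ℤ, (h : ℤ) = ((q : ℤ) - 1) + ((q : ℤ) * PZ - 1) * t
      ∧ 0 ≤ t ∧ t ≤ (q : ℤ) - 2 := by
    refine ⟨(q : ℤ) * Dn - S.card, ?_, ?_, ?_⟩
    · rw [← hp3]
      linear_combination HtopZ - geoZ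
    · -- nonnegativity from h ≥ 0
      by_contra hneg
      push_neg at hneg
      have hc1 : (q : ℤ) * Dn - S.card ≤ -1 := by
        have := Int.lt_iff_add_one_le.mp hneg
        linarith
      have hqP : (q : ℤ) + 1 ≤ (q : ℤ) * PZ := by
        have h' := mul_le_mul_of_nonneg_left hPZ2 (show (0 : ℤ) ≤ (q : ℤ) by linarith)
        linarith
      have hmul := mul_le_mul_of_nonneg_left hc1 (show (0 : ℤ) ≤ (q : ℤ) * PZ - 1 by linarith)
      have hh0 : (0 : ℤ) ≤ (h : ℤ) := Int.natCast_nonneg _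
      have hht : (h : ℤ) = ((q : ℤ) - 1) + ((q : ℤ) * PZ - 1) * ((q : ℤ) * Dn - S.card) := by
        rw [← hp3]; linear_combination HtopZ - geoZ
      linarith
    · have h2' : ((q * Dn + 2 : ℕ) : ℤ) ≤ ((S.card + q : ℕ) : ℤ) := by exact_mod_cast hn2
      push_cast at h2'
      linarith
  -- dual space setup
  letI : Finite (Module.Dual F (Fin v → F)) := DFunLike.finite _
  letI : Fintype (Module.Dual F (Fin v → F)) := Fintype.ofFinite _
  have hdualrank : finrank F (Module.Dual F (Fin v → F)) = v := by
    rw [Subspace.dual_finrank_eq, hfinV]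
  set Φ : Finset (Module.Dual F (Fin v → F)) := Finset.univ.filter (fun φ => φ ≠ 0) with hPhidef
  clear_value Φ
  have hPhiZ : (Φ.card : ℤ) + 1 = (q : ℤ) ^ v := by
    have h1 := aux_card_filter_dual (⊤ : Submodule F (Module.Dual F (Fin v → F)))
    rw [finrank_top, hdualrank, ← hqdef] at h1
    try simp only [Finset.filter_congr_decidable] at h1
    have e : (Finset.univ.filter fun φ : Module.Dual F (Fin v → F) =>
        φ ∈ (⊤ : Submodule F (Module.Dual F (Fin v → F))) ∧ φ ≠ 0) = Φ := by
      rw [hPhidef]; ext φ; simp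
    rw [e] at h1
    exact_mod_cast h1
  -- number of nonzero functionals vanishing at a nonzero point
  have hx_count : ∀ x : Fin v → F, x ≠ 0 →
      (Φ.filter fun φ => φ x = 0).card + 1 = q ^ (v - 1) := by
    intro x hx
    obtain ⟨i, hi⟩ : ∃ i, x i ≠ 0 := by
      by_contra hc; push_neg at hc; exact hx (funext hc)
    have hev : Module.Dual.eval F (Fin v → F) x ≠ 0 := by
      intro h0
      apply hi
      have h1 : Module.Dual.eval F (Fin v → F) x (LinearMap.proj i) = 0 := by rw [h0]; rfl
      simpa using h1
    have hkr : finrank F (LinearMap.ker (Module.Dual.eval F (Fin v → F) x)) = v - 1 := by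
      have h1 := Module.Dual.finrank_ker_add_one_of_ne_zero hev
      rw [hdualrank] at h1; omega
    have hcard := aux_card_filter_dual (LinearMap.ker (Module.Dual.eval F (Fin v → F) x))
    rw [hkr, ← hqdef] at hcard
    try simp only [Finset.filter_congr_decidable] at hcard
    have e : (Finset.univ.filter fun φ : Module.Dual F (Fin v → F) =>
        φ ∈ LinearMap.ker (Module.Dual.eval F (Fin v → F) x) ∧ φ ≠ 0)
        = Φ.filter fun φ => φ x = 0 := by
      rw [hPhidef]; ext φ
      simp only [Finset.mem_filter, Finset.mem_univ, true_and, LinearMap.mem_ker,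
        Module.Dual.eval_apply]
      tauto
    rw [e] at hcard
    exact hcard
  -- per-hyperplane lower bound
  have hyp : ∀ φ ∈ Φ, ((q : ℤ) - 1) + t * (PZ - 1) ≤
      ((Finset.univ.filter fun x : Fin v → F =>
        x ∈ LinearMap.ker φ ∧ x ≠ 0 ∧ ∀ W ∈ S, x ∉ W).card : ℤ) := by
    intro φ hφmem
    have hφ : φ ≠ 0 := by rw [hPhidef] at hφmem; simpa using hφmem
    have hb : (S.filter fun W => W ≤ LinearMap.ker φ).card
        + (S.filter fun W => ¬ W ≤ LinearMap.ker φ).card = S.card :=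
      Finset.card_filter_add_card_filter_not _
    set b1 : ℕ := (S.filter fun W => W ≤ LinearMap.ker φ).card with hb1def
    set b2 : ℕ := (S.filter fun W => ¬ W ≤ LinearMap.ker φ).card with hb2def
    have hbZ : (b1 : ℤ) + (b2 : ℤ) = (S.card : ℤ) := by exact_mod_cast hb
    have hkerr : finrank F (LinearMap.ker φ) = v - 1 := by
      have h1 := Module.Dual.finrank_ker_add_one_of_ne_zero hφ
      rw [hfinV] at h1; omega
    have hcount := aux_count S hdisj (LinearMap.ker φ)
    try simp only [Finset.filter_congr_decidable] at hcount
    have hcountZ := congrArg (fun z : ℕ => (z : ℤ)) hcount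
    push_cast at hcountZ
    have hcT2 : ((Finset.univ.filter fun x : Fin v → F =>
        x ∈ LinearMap.ker φ ∧ x ≠ 0).card : ℤ) + 1 = PZ * QZ := by
      have h1 := aux_card_filter (LinearMap.ker φ)
      rw [hkerr, ← hqdef] at h1
      try simp only [Finset.filter_congr_decidable] at h1
      rw [← hp2]
      exact_mod_cast h1
    rw [← Finset.sum_filter_add_sum_filter_not S (fun W => W ≤ LinearMap.ker φ)
        (fun W => ((Finset.univ.filter fun x : Fin v → F =>
          x ∈ W ⊓ LinearMap.ker φ ∧ x ≠ 0).card : ℤ))] at hcountZ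
    have hv1 : ∀ W ∈ S.filter (fun W => W ≤ LinearMap.ker φ),
        ((Finset.univ.filter fun x : Fin v → F =>
          x ∈ W ⊓ LinearMap.ker φ ∧ x ≠ 0).card : ℤ) = (q : ℤ) * PZ - 1 := by
      intro W hW
      rw [Finset.mem_filter] at hW
      have hinf : W ⊓ LinearMap.ker φ = W := inf_eq_left.mpr hW.2
      have hc := aux_card_filter (W ⊓ LinearMap.ker φ)
      rw [hinf, hdim W hW.1, ← hqdef] at hc
      try simp only [Finset.filter_congr_decidable] at hc
      rw [hinf]
      have h2 := congrArg (fun z : ℕ => (z : ℤ)) hc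
      push_cast at h2
      rw [hp3] at h2
      linear_combination h2
    have hv2 : ∀ W ∈ S.filter (fun W => ¬ W ≤ LinearMap.ker φ),
        ((Finset.univ.filter fun x : Fin v → F =>
          x ∈ W ⊓ LinearMap.ker φ ∧ x ≠ 0).card : ℤ) = PZ - 1 := by
      intro W hW
      rw [Finset.mem_filter] at hW
      have hfr : finrank F ↥(W ⊓ LinearMap.ker φ) = r - 1 := by
        have h1 := aux_finrank_inf φ hφ W hW.2
        rw [hdim W hW.1] at h1; omega
      have hc := aux_card_filter (W ⊓ LinearMap.ker φ)
      rw [hfr, ← hqdef] at hc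
      try simp only [Finset.filter_congr_decidable] at hc
      have h2 := congrArg (fun z : ℕ => (z : ℤ)) hc
      push_cast at h2
      rw [← hPZdef] at h2
      linear_combination h2
    rw [Finset.sum_congr rfl hv1, Finset.sum_congr rfl hv2, Finset.sum_const,
      Finset.sum_const, nsmul_eq_mul, nsmul_eq_mul, ← hb1def, ← hb2def] at hcountZ
    -- re-derive h = m + t*M form and HtopZ in atoms
    have HtopP : (h : ℤ) + (S.card : ℤ) * ((q : ℤ) * PZ - 1) = (q : ℤ) * (PZ * QZ) - 1 := by
      rw [← hp3, ← hp1]; exact HtopZ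
    have key : ((Finset.univ.filter fun x : Fin v → F =>
        x ∈ LinearMap.ker φ ∧ x ≠ 0 ∧ ∀ W ∈ S, x ∉ W).card : ℤ)
        = (((q : ℤ) - 1) + t * (PZ - 1))
          + (((q : ℤ) - 1) * PZ) * (t - QZ + (b2 : ℤ)) := by
      linear_combination hcountZ + hcT2 - HtopP + ht + (1 - (q : ℤ) * PZ) * hbZ
    have hxpos : (0 : ℤ) ≤ ((Finset.univ.filter fun x : Fin v → F =>
        x ∈ LinearMap.ker φ ∧ x ≠ 0 ∧ ∀ W ∈ S, x ∉ W).card : ℤ) := Int.natCast_nonneg _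
    have hmM : (((q : ℤ) - 1) + t * (PZ - 1)) + 1 ≤ ((q : ℤ) - 1) * PZ := by
      linarith [mul_le_mul_of_nonneg_right htub (show (0 : ℤ) ≤ PZ - 1 by linarith)]
    have hc0 : 0 ≤ t - QZ + (b2 : ℤ) := by
      by_contra hneg
      push_neg at hneg
      have hc1 : t - QZ + (b2 : ℤ) ≤ -1 := by omega
      have hmul := mul_le_mul_of_nonneg_left hc1
        (show (0 : ℤ) ≤ ((q : ℤ) - 1) * PZ from mul_nonneg (by linarith) (by linarith))
      linarith
    linarith [mul_nonneg (show (0 : ℤ) ≤ ((q : ℤ) - 1) * PZ from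
      mul_nonneg (by linarith) (by linarith)) hc0]
  -- double counting
  have hdc : ∑ φ ∈ Φ, (Finset.univ.filter fun x : Fin v → F =>
      x ∈ LinearMap.ker φ ∧ x ≠ 0 ∧ ∀ W ∈ S, x ∉ W).card
      = h * (q ^ (v - 1) - 1) := by
    have e1 : ∀ φ : Module.Dual F (Fin v → F), (Finset.univ.filter fun x : Fin v → F =>
        x ∈ LinearMap.ker φ ∧ x ≠ 0 ∧ ∀ W ∈ S, x ∉ W)
        = HS.filter (fun x => φ x = 0) := by
      intro φ
      rw [hHSdef]
      ext x
      simp only [Finset.mem_filter, Finset.mem_univ, true_and, LinearMap.mem_ker,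
        Submodule.mem_top]
      tauto
    calc ∑ φ ∈ Φ, (Finset.univ.filter fun x : Fin v → F =>
        x ∈ LinearMap.ker φ ∧ x ≠ 0 ∧ ∀ W ∈ S, x ∉ W).card
        = ∑ φ ∈ Φ, (HS.filter (fun x => φ x = 0)).card := by
          exact Finset.sum_congr rfl fun φ _ => by rw [e1]
      _ = ∑ x ∈ HS, (Φ.filter (fun φ => φ x = 0)).card := by
          simp only [Finset.card_filter]
          exact Finset.sum_comm
      _ = ∑ x ∈ HS, (q ^ (v - 1) - 1) := by
          refine Finset.sum_congr rfl fun x hx => ?_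
          have hx0 : x ≠ 0 := by
            rw [hHSdef] at hx
            simp only [Finset.mem_filter] at hx
            exact hx.2.2.1
          exact Nat.eq_sub_of_add_eq (hx_count x hx0)
      _ = h * (q ^ (v - 1) - 1) := by
          rw [Finset.sum_const, smul_eq_mul, hhdef]
  -- combine everything
  have hq1v : 1 ≤ q ^ (v - 1) := Nat.one_le_pow _ _ (by omega)
  have hdcZ : ∑ φ ∈ Φ, ((Finset.univ.filter fun x : Fin v → F =>
      x ∈ LinearMap.ker φ ∧ x ≠ 0 ∧ ∀ W ∈ S, x ∉ W).card : ℤ)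
      = (h : ℤ) * (PZ * QZ - 1) := by
    have h1 := congrArg (fun z : ℕ => (z : ℤ)) hdc
    push_cast [Nat.cast_sub hq1v] at h1
    rw [← hp2]
    exact_mod_cast h1
  have hlowsum : (Φ.card : ℤ) * (((q : ℤ) - 1) + t * (PZ - 1))
      ≤ ∑ φ ∈ Φ, ((Finset.univ.filter fun x : Fin v → F =>
        x ∈ LinearMap.ker φ ∧ x ≠ 0 ∧ ∀ W ∈ S, x ∉ W).card : ℤ) := by
    rw [← nsmul_eq_mul]
    exact Finset.card_nsmul_le_sum Φ _ _ hyp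
  have hPhiZ' : (Φ.card : ℤ) = (q : ℤ) * (PZ * QZ) - 1 := by
    rw [← hp1]; linarith
  have hm_h : (h : ℤ) = (((q : ℤ) - 1) + t * (PZ - 1)) + t * (((q : ℤ) - 1) * PZ) := by
    linear_combination ht
  have hiden : ((q : ℤ) * (PZ * QZ) - 1) * (((q : ℤ) - 1) + t * (PZ - 1))
      - (h : ℤ) * (PZ * QZ - 1)
      = ((q : ℤ) - 1) * (((q : ℤ) - 1 - t) * (PZ * QZ) + t * PZ) := by
    linear_combination (-(PZ * QZ - 1)) * hm_h
  have hstrict : (0 : ℤ) < ((q : ℤ) - 1) * (((q : ℤ) - 1 - t) * (PZ * QZ) + t * PZ) := by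
    have h1 : (1 : ℤ) ≤ (q : ℤ) - 1 - t := by linarith
    have h2 : (2 : ℤ) ≤ PZ * QZ := by
      have h' := mul_le_mul_of_nonneg_left hQZ1 (show (0 : ℤ) ≤ PZ by linarith)
      linarith
    have h3 : (1 : ℤ) * (PZ * QZ) ≤ ((q : ℤ) - 1 - t) * (PZ * QZ) :=
      mul_le_mul_of_nonneg_right h1 (by linarith)
    have h4 : (0 : ℤ) ≤ t * PZ := mul_nonneg htlb (by linarith)
    have hA : (0 : ℤ) < ((q : ℤ) - 1 - t) * (PZ * QZ) + t * PZ := by linarith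
    exact mul_pos (by linarith) hA
  rw [hPhiZ', hdcZ] at hlowsum
  linarith
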